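/- Under the weak Poincaré inequality ‖f‖² ≤ α(r)‖A₀f‖² + rΨ₀(f) (α decreasing, Ψ₀ decreasing along the semigroup e^{−tA₀*A₀}), for G := A₀*A₀ one has for all r > 0 and f ∈ D(A₀): ‖f‖² ≤ (1 + α(r)) ⟨(I+G)⁻¹ G f, f⟩ + r Ψ₀(f). -/

import Mathlib

open LinearPMap RealInnerProductSpace MeasureTheory

set_option maxHeartbeats 1000000 in
/-- Under the weak Poincaré inequality `‖f‖² ≤ α(r)‖A₀ f‖² + r Ψ₀(f)` (`α` decreasing, `Ψ₀`
decreasing along the semigroup `e^{−t A₀*A₀}`), for `G := A₀*A₀` one has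
`‖f‖² ≤ (1 + α(r)) ⟨(I+G)⁻¹ G f, f⟩ + r Ψ₀(f)` for all `r > 0` and `f ∈ D(A₀)`.
This is the special case `ν(ds) = e^{−s} ds`, `φ_ν(s) = s/(1+s)`, where by subordination
`⟨(I+G)⁻¹ G f, f⟩ = ∫₀^∞ ⟨f − P⁰_s f, f⟩ e^{−s} ds`. -/
theorem weak_poincare_resolvent_form
    {H₀ : Type*} [NormedAddCommGroup H₀] [InnerProductSpace ℝ H₀] [CompleteSpace H₀]
    (A₀ : H₀ →ₗ.[ℝ] H₀) (hdense : Dense (A₀.domain : Set H₀))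
    (hclosed : IsClosed (A₀.graph : Set (H₀ × H₀)))
    (P : ℝ → H₀ →L[ℝ] H₀)
    (hP0 : P 0 = ContinuousLinearMap.id ℝ H₀)
    (hPsemi : ∀ s t : ℝ, 0 ≤ s → 0 ≤ t → P (s + t) = (P s).comp (P t))
    (hPcontr : ∀ t : ℝ, 0 ≤ t → ‖P t‖ ≤ 1)
    (hPsym : ∀ t : ℝ, 0 ≤ t → ∀ f g : H₀, ⟪P t f, g⟫ = ⟪f, P t g⟫)
    (hPdom : ∀ f ∈ A₀.domain, ∀ t : ℝ, 0 ≤ t → P t f ∈ A₀.domain)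
    (hderiv : ∀ (f : H₀) (hf : f ∈ A₀.domain) (t : ℝ) (ht : 0 ≤ t),
      HasDerivAt (fun s => ‖P s f‖ ^ 2)
        (-2 * ‖A₀ ⟨P t f, hPdom f hf t ht⟩‖ ^ 2) t)
    (Ψ₀ : H₀ → ℝ) (hΨ₀ : ∀ f : H₀, 0 ≤ Ψ₀ f)
    (hΨP : ∀ (f : H₀) (t : ℝ), 0 ≤ t → Ψ₀ (P t f) ≤ Ψ₀ f)
    (α : ℝ → ℝ) (hα_pos : ∀ r > 0, 0 < α r) (hα_anti : AntitoneOn α (Set.Ioi 0))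
    (hWP : ∀ r > 0, ∀ (f : H₀) (hf : f ∈ A₀.domain),
      ‖f‖ ^ 2 ≤ α r * ‖A₀ ⟨f, hf⟩‖ ^ 2 + r * Ψ₀ f)
    -- `JG = (I+G)⁻¹ G` for `G = A₀*A₀`, characterized by Bochner subordination with
    -- `ν(ds) = e^{−s} ds`
    (JG : H₀ →L[ℝ] H₀)
    (hJG : ∀ f : H₀, ⟪JG f, f⟫ =
        ∫ s in Set.Ioi (0 : ℝ), ⟪f - P s f, f⟫ * Real.exp (-s)) :
    ∀ r > 0, ∀ f ∈ A₀.domain,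
      ‖f‖ ^ 2 ≤ (1 + α r) * ⟪JG f, f⟫ + r * Ψ₀ f := by
  intro r hr f hf
  set a : ℝ := α r with ha_def
  have ha : 0 < a := hα_pos r hr
  set c : ℝ := ‖f‖ ^ 2 - r * Ψ₀ f with hc_def
  set u : ℝ → ℝ := fun t => ‖P t f‖ ^ 2 with hu_def
  have hu0 : u 0 = ‖f‖ ^ 2 := by simp [hu_def, hP0]
  have hucontr : ∀ t : ℝ, 0 ≤ t → u t ≤ ‖f‖ ^ 2 := by
    intro t ht
    have h1 : ‖P t f‖ ≤ ‖f‖ := by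
      calc ‖P t f‖ ≤ ‖P t‖ * ‖f‖ := (P t).le_opNorm f
        _ ≤ 1 * ‖f‖ := by
            exact mul_le_mul_of_nonneg_right (hPcontr t ht) (norm_nonneg f)
        _ = ‖f‖ := one_mul _
    exact pow_le_pow_left₀ (norm_nonneg _) h1 2
  have hunn : ∀ t : ℝ, 0 ≤ u t := fun t => sq_nonneg _
  -- continuity of u on [0, ∞)
  have hucont : ContinuousOn u (Set.Ici 0) := fun t ht =>
    (hderiv f hf t ht).continuousAt.continuousWithinAt
  -- differential inequality from the weak Poincaré inequality
  have hdiffineq : ∀ (t : ℝ) (ht : 0 ≤ t),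
      2 / a * (u t - r * Ψ₀ f) ≤ 2 * ‖A₀ ⟨P t f, hPdom f hf t ht⟩‖ ^ 2 := by
    intro t ht
    have h1 := hWP r hr (P t f) (hPdom f hf t ht)
    have h2 : r * Ψ₀ (P t f) ≤ r * Ψ₀ f :=
      mul_le_mul_of_nonneg_left (hΨP f t ht) hr.le
    have h3 : u t - r * Ψ₀ f ≤ a * ‖A₀ ⟨P t f, hPdom f hf t ht⟩‖ ^ 2 := by
      have h1' : u t ≤ a * ‖A₀ ⟨P t f, hPdom f hf t ht⟩‖ ^ 2 + r * Ψ₀ (P t f) := h1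
      linarith
    rw [div_mul_eq_mul_div, div_le_iff₀ ha]
    nlinarith
  -- Gronwall: `u t - r Ψ₀ f ≤ exp (-(2/a) t) * c`
  have key1 : ∀ t : ℝ, 0 ≤ t → u t - r * Ψ₀ f ≤ Real.exp (-(2 / a) * t) * c := by
    intro t ht
    set g : ℝ → ℝ := fun s => Real.exp (2 / a * s) * (u s - r * Ψ₀ f) with hg_def
    have hg : ∀ (s : ℝ) (hs : 0 ≤ s), HasDerivAt g
        (Real.exp (2 / a * s) * (2 / a) * (u s - r * Ψ₀ f)
          + Real.exp (2 / a * s) * (-2 * ‖A₀ ⟨P s f, hPdom f hf s hs⟩‖ ^ 2)) s := by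
      intro s hs
      have h1 : HasDerivAt (fun x : ℝ => Real.exp (2 / a * x))
          (Real.exp (2 / a * s) * (2 / a)) s := by
        simpa using ((hasDerivAt_id s).const_mul (2 / a)).exp
      have h2 : HasDerivAt (fun x : ℝ => u x - r * Ψ₀ f)
          (-2 * ‖A₀ ⟨P s f, hPdom f hf s hs⟩‖ ^ 2) s :=
        (hderiv f hf s hs).sub_const _
      exact h1.mul h2
    have hganti : AntitoneOn g (Set.Ici 0) := by
      apply antitoneOn_of_deriv_nonpos (convex_Ici 0)
      · intro s hs
        exact ((hg s hs).continuousAt).continuousWithinAt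
      · intro s hs
        rw [interior_Ici] at hs
        exact ((hg s (le_of_lt hs)).differentiableAt).differentiableWithinAt
      · intro s hs
        rw [interior_Ici] at hs
        rw [(hg s hs.le).deriv]
        have hexp := Real.exp_pos (2 / a * s)
        have hd := hdiffineq s hs.le
        nlinarith
    have h0 : g t ≤ g 0 := hganti (Set.self_mem_Ici) ht ht
    have hg0 : g 0 = c := by simp [hg_def, hu0, hc_def]
    rw [hg0] at h0
    have hepos : (0 : ℝ) < Real.exp (2 / a * t) := Real.exp_pos _
    have : u t - r * Ψ₀ f ≤ c / Real.exp (2 / a * t) := by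
      rw [le_div_iff₀ hepos]
      calc (u t - r * Ψ₀ f) * Real.exp (2 / a * t)
          = g t := by rw [hg_def]; ring
        _ ≤ c := h0
    calc u t - r * Ψ₀ f ≤ c / Real.exp (2 / a * t) := this
      _ = Real.exp (-(2 / a) * t) * c := by
          rw [div_eq_mul_inv, ← Real.exp_neg]; ring_nf
  -- representation of the inner product along the semigroup
  have key2 : ∀ s : ℝ, 0 ≤ s → ⟪P s f, f⟫ = u (s / 2) := by
    intro s hs
    have hs2 : (0 : ℝ) ≤ s / 2 := by linarith
    have hsplit : P s = (P (s / 2)).comp (P (s / 2)) := by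
      have h := hPsemi (s / 2) (s / 2) hs2 hs2
      rw [show s / 2 + s / 2 = s by ring] at h
      exact h
    rw [hsplit]
    have : ⟪P (s / 2) (P (s / 2) f), f⟫ = ⟪P (s / 2) f, P (s / 2) f⟫ :=
      hPsym (s / 2) hs2 (P (s / 2) f) f
    simpa [hu_def, real_inner_self_eq_norm_sq] using this
  -- pointwise lower bound for the integrand
  set b : ℝ := a⁻¹ + 1 with hb_def
  have hb : 0 < b := by positivity
  have key3 : ∀ s ∈ Set.Ioi (0 : ℝ),
      c * Real.exp (-s) - c * Real.exp (-b * s) ≤ ⟪f - P s f, f⟫ * Real.exp (-s) := by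
    intro s hs
    rw [Set.mem_Ioi] at hs
    have h1 : ⟪f - P s f, f⟫ = ‖f‖ ^ 2 - u (s / 2) := by
      rw [inner_sub_left, key2 s hs.le, real_inner_self_eq_norm_sq]
    have h2 : u (s / 2) - r * Ψ₀ f ≤ Real.exp (-(2 / a) * (s / 2)) * c :=
      key1 (s / 2) (by linarith)
    have h3 : -(2 / a) * (s / 2) = -(a⁻¹ * s) := by field_simp
    rw [h3] at h2
    have h4 : (1 - Real.exp (-(a⁻¹ * s))) * c ≤ ⟪f - P s f, f⟫ := by
      rw [h1, hc_def]; nlinarith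
    have h5 : Real.exp (-(a⁻¹ * s)) * Real.exp (-s) = Real.exp (-b * s) := by
      rw [← Real.exp_add]; congr 1; rw [hb_def]; ring
    have hepos : (0 : ℝ) < Real.exp (-s) := Real.exp_pos _
    calc c * Real.exp (-s) - c * Real.exp (-b * s)
        = (1 - Real.exp (-(a⁻¹ * s))) * c * Real.exp (-s) := by rw [← h5]; ring
      _ ≤ ⟪f - P s f, f⟫ * Real.exp (-s) :=
          mul_le_mul_of_nonneg_right h4 hepos.le
  -- integrability facts
  have hint1 : IntegrableOn (fun s : ℝ => Real.exp (-s)) (Set.Ioi 0) := by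
    simpa using exp_neg_integrableOn_Ioi (0 : ℝ) one_pos
  have hint2 : IntegrableOn (fun s : ℝ => Real.exp (-b * s)) (Set.Ioi 0) :=
    exp_neg_integrableOn_Ioi 0 hb
  have hintlhs : IntegrableOn
      (fun s : ℝ => c * Real.exp (-s) - c * Real.exp (-b * s)) (Set.Ioi 0) :=
    (hint1.const_mul c).sub (hint2.const_mul c)
  have hintrhs : IntegrableOn (fun s : ℝ => ⟪f - P s f, f⟫ * Real.exp (-s)) (Set.Ioi 0) := by
    have hcont : ContinuousOn (fun s : ℝ => ⟪f - P s f, f⟫ * Real.exp (-s)) (Set.Ioi 0) := by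
      have hhalf : ContinuousOn (fun s : ℝ => u (s / 2)) (Set.Ioi 0) := by
        apply hucont.comp (continuous_id.div_const 2).continuousOn
        intro s hs
        rw [Set.mem_Ioi] at hs
        simp only [id_eq]
        exact Set.mem_Ici.mpr (by positivity)
      have : ContinuousOn (fun s : ℝ => (‖f‖ ^ 2 - u (s / 2)) * Real.exp (-s))
          (Set.Ioi 0) :=
        ((continuousOn_const.sub hhalf).mul (Real.continuous_exp.comp continuous_neg).continuousOn)
      apply this.congr
      intro s hs
      rw [Set.mem_Ioi] at hs
      simp only [inner_sub_left, key2 s hs.le, real_inner_self_eq_norm_sq]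
    apply Integrable.mono' ((hint1.const_mul (2 * ‖f‖ ^ 2)))
      (hcont.aestronglyMeasurable measurableSet_Ioi)
    rw [ae_restrict_iff' measurableSet_Ioi]
    filter_upwards with s hs
    rw [Set.mem_Ioi] at hs
    have h1 : ⟪f - P s f, f⟫ = ‖f‖ ^ 2 - u (s / 2) := by
      rw [inner_sub_left, key2 s hs.le, real_inner_self_eq_norm_sq]
    have h2 : |‖f‖ ^ 2 - u (s / 2)| ≤ 2 * ‖f‖ ^ 2 := by
      rw [abs_le]
      constructor
      · have := hucontr (s / 2) (by linarith)
        nlinarith [hunn (s / 2), sq_nonneg ‖f‖]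
      · have := hunn (s / 2)
        nlinarith [sq_nonneg ‖f‖]
    have hepos : (0 : ℝ) < Real.exp (-s) := Real.exp_pos _
    calc ‖⟪f - P s f, f⟫ * Real.exp (-s)‖
        = |⟪f - P s f, f⟫| * Real.exp (-s) := by
          rw [norm_mul, Real.norm_eq_abs, Real.norm_eq_abs, abs_of_pos hepos]
      _ ≤ 2 * ‖f‖ ^ 2 * Real.exp (-s) := by
          apply mul_le_mul_of_nonneg_right _ hepos.le
          rw [h1]; exact h2
  -- compute the easy integral
  have hI2 : (∫ s in Set.Ioi (0 : ℝ), Real.exp (-b * s)) = b⁻¹ := by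
    simp only [neg_mul]
    have := integral_comp_mul_left_Ioi (fun x : ℝ => Real.exp (-x)) 0 hb
    simp only [mul_zero, smul_eq_mul] at this
    rw [this, integral_exp_neg_Ioi_zero, mul_one]
  have hIlhs : (∫ s in Set.Ioi (0 : ℝ), (c * Real.exp (-s) - c * Real.exp (-b * s)))
      = c * (1 - b⁻¹) := by
    rw [integral_sub (hint1.const_mul c) (hint2.const_mul c),
      integral_const_mul, integral_const_mul, integral_exp_neg_Ioi_zero, hI2]
    ring
  -- put everything together
  have hmono : c * (1 - b⁻¹) ≤ ⟪JG f, f⟫ := by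
    rw [hJG f, ← hIlhs]
    exact setIntegral_mono_on hintlhs hintrhs measurableSet_Ioi key3
  have hbinv : 1 - b⁻¹ = 1 / (1 + a) := by
    rw [hb_def]
    field_simp
    ring
  rw [hbinv] at hmono
  have h1a : (0 : ℝ) < 1 + a := by linarith
  have : c ≤ (1 + a) * ⟪JG f, f⟫ := by
    rw [show c * (1 / (1 + a)) = c / (1 + a) by ring] at hmono
    calc c = (1 + a) * (c / (1 + a)) := by field_simp
      _ ≤ (1 + a) * ⟪JG f, f⟫ := mul_le_mul_of_nonneg_left hmono h1a.le
  rw [hc_def] at this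
  linarith
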